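/- For every real ν with −1/2 < ν ≤ 1/2 and ν ≠ 0, one has P^{(ν)}_n(1) > 0 for all n ≥ 1, and the sequence n ↦ Q^{(ν)}_{n−1}(1)/P^{(ν)}_n(1) tends to +∞ as n → ∞ (in particular it is unbounded). -/

import Mathlib

open Polynomial Filter MeasureTheory

noncomputable section

/-- Recurrence coefficients `β_k = k(k+2ν−1)/(4(k+ν)(k+ν−1))` of the monic
ultraspherical polynomials. -/
def ultraBeta (ν : ℝ) (k : ℕ) : ℝ :=
  k * (k + 2 * ν - 1) / (4 * (k + ν) * (k + ν - 1))

/-- Monic ultraspherical polynomials `P^{(ν)}_0 = 1`, `P^{(ν)}_1 = X`,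
`P^{(ν)}_{k+1} = X·P^{(ν)}_k − β_k·P^{(ν)}_{k−1}`. -/
def ultraP (ν : ℝ) : ℕ → Polynomial ℝ
  | 0 => 1
  | 1 => X
  | (k + 2) => X * ultraP ν (k + 1) - C (ultraBeta ν (k + 1)) * ultraP ν k

/-- First-order numerator polynomials `Q^{(ν)}_0 = 1`, `Q^{(ν)}_1 = X`,
`Q^{(ν)}_{k+1} = X·Q^{(ν)}_k − β_{k+1}·Q^{(ν)}_{k−1}`. -/
def ultraQ (ν : ℝ) : ℕ → Polynomial ℝ
  | 0 => 1
  | 1 => X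
  | (k + 2) => X * ultraQ ν (k + 1) - C (ultraBeta ν (k + 2)) * ultraQ ν k

/-- Co-dilated ultraspherical polynomials: same recurrence as `ultraP ν`, except that
the single coefficient `β_1` is replaced by `λ·β_1`. -/
def ultraPstar (ν lam : ℝ) : ℕ → Polynomial ℝ
  | 0 => 1
  | 1 => X
  | (k + 2) => X * ultraPstar ν lam (k + 1) -
      C (if k + 1 = 1 then lam * ultraBeta ν 1 else ultraBeta ν (k + 1)) * ultraPstar ν lam k

private lemma ultraP_eval_rec (ν : ℝ) (k : ℕ) :
    (ultraP ν (k+2)).eval 1 = (ultraP ν (k+1)).eval 1 - ultraBeta ν (k+1) * (ultraP ν k).eval 1 := by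
  simp [ultraP]

private lemma ultraQ_eval_rec (ν : ℝ) (k : ℕ) :
    (ultraQ ν (k+2)).eval 1 = (ultraQ ν (k+1)).eval 1 - ultraBeta ν (k+2) * (ultraQ ν k).eval 1 := by
  simp [ultraQ]

set_option maxHeartbeats 2000000 in
theorem ultraspherical_numerator_quotient_divergent (ν : ℝ)
    (hν₁ : -(1 / 2) < ν) (hν₂ : ν ≤ 1 / 2) (hν₀ : ν ≠ 0) :
    (∀ n : ℕ, 1 ≤ n → 0 < (ultraP ν n).eval 1) ∧
    Tendsto (fun n : ℕ => (ultraQ ν (n - 1)).eval 1 / (ultraP ν n).eval 1) atTop atTop := by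
  set p : ℕ → ℝ := fun n => (ultraP ν n).eval 1 with hpdef
  set q : ℕ → ℝ := fun n => (ultraQ ν n).eval 1 with hqdef
  have hp0 : p 0 = 1 := by simp [hpdef, ultraP]
  have hp1 : p 1 = 1 := by simp [hpdef, ultraP]
  have hq0 : q 0 = 1 := by simp [hqdef, ultraQ]
  have hq1 : q 1 = 1 := by simp [hqdef, ultraQ]
  have hν' : (0:ℝ) < 1 + 2*ν := by linarith
  have hν'' : (0:ℝ) < 1 + ν := by linarith
  have hprec : ∀ k : ℕ, p (k+2) = p (k+1) - ultraBeta ν (k+1) * p k :=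
    fun k => ultraP_eval_rec ν k
  have hqrec : ∀ k : ℕ, q (k+2) = q (k+1) - ultraBeta ν (k+2) * q k :=
    fun k => ultraQ_eval_rec ν k
  clear_value p q
  -- the ratio formula
  have key : ∀ n : ℕ, 1 ≤ n → p (n+1) = ((n:ℝ) + 2*ν)/(2*((n:ℝ)+ν)) * p n := by
    intro n hn
    induction n, hn using Nat.le_induction with
    | base =>
      have h := hprec 0
      rw [h, hp0, hp1]
      unfold ultraBeta
      push_cast
      field_simp
      ring_nf
      rw [mul_inv_cancel₀ hν₀]
      ring
    | succ n hn ih =>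
      have hcast : (1:ℝ) ≤ (n:ℝ) := by exact_mod_cast hn
      have hA : ((n:ℝ)+ν) ≠ 0 := by intro h; rw [add_eq_zero_iff_eq_neg] at h; linarith
      have hB : ((n:ℝ)+1+ν) ≠ 0 := by intro h; nlinarith
      have hbeta : ultraBeta ν (n+1)
          = (((n:ℝ)+1)*((n:ℝ)+2*ν))/(4*((n:ℝ)+1+ν)*((n:ℝ)+ν)) := by
        unfold ultraBeta
        push_cast
        congr 1 <;> ring
      have h := hprec n
      rw [ih, hbeta] at h
      rw [h, ih]
      field_simp
      push_cast
      field_simp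
      ring
  -- positivity
  have ppos : ∀ n : ℕ, 1 ≤ n → 0 < p n := by
    intro n hn
    induction n, hn using Nat.le_induction with
    | base => rw [hp1]; norm_num
    | succ n hn ih =>
      rw [key n hn]
      have hcast : (1:ℝ) ≤ (n:ℝ) := by exact_mod_cast hn
      have h1 : (0:ℝ) < (n:ℝ) + 2*ν := by linarith
      have h2 : (0:ℝ) < 2*((n:ℝ)+ν) := by linarith
      exact mul_pos (div_pos h1 h2) ih
  -- the increment bound
  have T : ∀ m : ℕ, 1/((m:ℝ)+2) ≤ q (m+1) / p (m+2) - q m / p (m+1) := by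
    intro m
    induction m with
    | zero =>
      have hp2 : p 2 = (1+2*ν)/(2*(1+ν)) * p 1 := by
        have := key 1 le_rfl; push_cast at this; exact this
      rw [hp1, mul_one] at hp2
      have hval : q 1 / p 2 - q 0 / p 1 = 1/(1+2*ν) := by
        rw [hp2, hq0, hq1, hp1]
        field_simp
        ring
      rw [hval]
      push_cast
      rw [div_le_div_iff₀ (by norm_num) hν']
      linarith
    | succ m ihm =>
      have hcm : (0:ℝ) ≤ (m:ℝ) := Nat.cast_nonneg m
      have hpm1 : 0 < p (m+1) := ppos (m+1) (by omega)
      have hpm2 : 0 < p (m+2) := ppos (m+2) (by omega)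
      have h1 : p (m+2) = ((m:ℝ)+1+2*ν)/(2*((m:ℝ)+1+ν)) * p (m+1) := by
        have := key (m+1) (by omega); push_cast at this; convert this using 3 <;> ring
      have h2 : p (m+3) = ((m:ℝ)+2+2*ν)/(2*((m:ℝ)+2+ν)) * p (m+2) := by
        have := key (m+2) (by omega); push_cast at this; convert this using 3 <;> ring
      have hq' := hqrec m
      have hne1 : ((m:ℝ)+1+ν) ≠ 0 := by intro h; nlinarith
      have hne2 : ((m:ℝ)+2+ν) ≠ 0 := by intro h; nlinarith
      have hne3 : ((m:ℝ)+1+2*ν) ≠ 0 := by intro h; nlinarith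
      have hne4 : ((m:ℝ)+2+2*ν) ≠ 0 := by intro h; nlinarith
      have hpne : p (m+1) ≠ 0 := ne_of_gt hpm1
      have heq : q (m+2) / p (m+3) - q (m+1) / p (m+2)
          = ((m:ℝ)+2)/((m:ℝ)+2+2*ν) * (q (m+1) / p (m+2) - q m / p (m+1)) := by
        have hbeta : ultraBeta ν (m+2)
            = (((m:ℝ)+2)*((m:ℝ)+1+2*ν))/(4*((m:ℝ)+2+ν)*((m:ℝ)+1+ν)) := by
          unfold ultraBeta
          push_cast
          congr 1 <;> ring
        rw [hq', hbeta, h2, h1]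
        field_simp
        ring
      have htpos : (0:ℝ) < 1/((m:ℝ)+2) := by positivity
      have hc1 : ((m:ℝ)+2)/((m:ℝ)+3) ≤ ((m:ℝ)+2)/((m:ℝ)+2+2*ν) := by
        apply div_le_div_of_nonneg_left (by linarith) (by linarith) (by linarith)
      have hc0 : (0:ℝ) < ((m:ℝ)+2)/((m:ℝ)+3) := by positivity
      have hstep : ((m:ℝ)+2)/((m:ℝ)+3) * (1/((m:ℝ)+2))
          ≤ ((m:ℝ)+2)/((m:ℝ)+2+2*ν) * (q (m+1) / p (m+2) - q m / p (m+1)) :=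
        mul_le_mul hc1 ihm (le_of_lt htpos)
          (le_of_lt (div_pos (by linarith) (by linarith)))
      have hfin : ((m:ℝ)+2)/((m:ℝ)+3) * (1/((m:ℝ)+2)) = 1/((m:ℝ)+3) := by
        field_simp
      rw [heq]
      push_cast
      calc 1/((m:ℝ)+1+2) = 1/((m:ℝ)+3) := by ring_nf
        _ = ((m:ℝ)+2)/((m:ℝ)+3) * (1/((m:ℝ)+2)) := hfin.symm
        _ ≤ _ := hstep
  -- quotient dominates harmonic sums
  have Sge : ∀ m : ℕ, (∑ i ∈ Finset.range (m+1), (1:ℝ)/(i+1)) ≤ q m / p (m+1) := by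
    intro m
    induction m with
    | zero => simp [hq0, hp1]
    | succ m ihm =>
      rw [Finset.sum_range_succ]
      have ht := T m
      show _ ≤ q (m+1) / p (m+2)
      push_cast
      rw [show ((m:ℝ)+1+1) = (m:ℝ)+2 from by ring]
      linarith
  constructor
  · intro n hn
    have h := ppos n hn
    rw [hpdef] at h
    simpa using h
  · have hfun : (fun n : ℕ => (ultraQ ν (n-1)).eval 1 / (ultraP ν n).eval 1)
        = fun n : ℕ => q (n-1) / p n := by rw [hpdef, hqdef]
    rw [hfun]
    apply tendsto_atTop_mono' atTop ?_ Real.tendsto_sum_range_one_div_nat_succ_atTop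
    filter_upwards [eventually_ge_atTop 1] with n hn
    obtain ⟨m, rfl⟩ : ∃ m, n = m + 1 := ⟨n-1, (Nat.succ_pred_eq_of_pos hn).symm⟩
    simpa using Sge m

end
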